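/- For each integer d ≥ 0, the number of polynomials u ∈ 𝔽₂[z] with deg(u) = d, u(0) = 1, and gcd(u, ũ) = 1 (where ũ(z) = z^d u(1/z)) equals 1 if d = 0; 0 if d = 1 or d = 2; and (2^{d−1} − 2·(−1)^d)/3 if d ≥ 3. -/

import Mathlib

open Polynomial

namespace Stmt5

abbrev F2 := ZMod 2

/-- Over `ZMod 2`, any nonzero element is 1. -/
lemma F2.eq_one {a : F2} (h : a ≠ 0) : a = 1 := by revert a; decide

/-- Every unit polynomial over F2 is 1. -/
lemma isUnit_eq_one {p : F2[X]} (h : IsUnit p) : p = 1 := by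
  obtain ⟨r, hr, rfl⟩ := Polynomial.isUnit_iff.mp h
  rw [F2.eq_one hr.ne_zero, map_one]

lemma normalize_eq_self (p : F2[X]) : normalize p = p := by
  rcases eq_or_ne p 0 with rfl | hp
  · simp
  · have : (normUnit p : F2[X]) = 1 := isUnit_eq_one (normUnit p).isUnit
    rw [normalize_apply, this, mul_one]

/-- A divisor of the same natDegree equals the polynomial. -/
lemma eq_of_dvd_of_natDegree_le {p q : F2[X]} (h : p ∣ q) (hq : q ≠ 0)
    (hdeg : q.natDegree ≤ p.natDegree) : p = q := by
  obtain ⟨c, rfl⟩ := h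
  have hp : p ≠ 0 := left_ne_zero_of_mul hq
  have hc : c ≠ 0 := right_ne_zero_of_mul hq
  have hdc : c.natDegree = 0 := by
    have := Polynomial.natDegree_mul hp hc
    omega
  have : c = 1 := by
    have h1 := Polynomial.natDegree_eq_zero.mp hdc
    obtain ⟨a, rfl⟩ := h1
    have : a ≠ 0 := fun h => hc (by simp [h])
    rw [F2.eq_one this, map_one]
  rw [this, mul_one]

lemma natTrailingDegree_eq_zero_of_coeff_zero {p : F2[X]} (h : p.coeff 0 = 1) :
    p.natTrailingDegree = 0 :=
  Polynomial.natTrailingDegree_eq_zero.mpr (Or.inr (by simp [h]))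

lemma natDegree_reverse_eq {p : F2[X]} (h : p.coeff 0 = 1) :
    p.reverse.natDegree = p.natDegree := by
  rw [Polynomial.reverse_natDegree, natTrailingDegree_eq_zero_of_coeff_zero h, Nat.sub_zero]

lemma reverse_reverse {p : F2[X]} (h : p.coeff 0 = 1) : p.reverse.reverse = p := by
  ext n
  rw [Polynomial.coeff_reverse, Polynomial.coeff_reverse, natDegree_reverse_eq h,
    Polynomial.revAt_invol]

lemma finite_subtype {P : F2[X] → Prop} (d : ℕ) (h : ∀ u, P u → u.natDegree ≤ d) :
    Finite {u : F2[X] // P u} := by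
  apply Finite.of_injective (fun (u : {u : F2[X] // P u}) => (fun i : Fin (d+1) => (u : F2[X]).coeff i))
  intro u v huv
  have h1 := h u.1 u.2
  have h2 := h v.1 v.2
  apply Subtype.ext
  apply Polynomial.ext
  intro n
  by_cases hn : n ≤ d
  · exact congrFun huv ⟨n, by omega⟩
  · rw [Polynomial.coeff_eq_zero_of_natDegree_lt (by omega),
      Polynomial.coeff_eq_zero_of_natDegree_lt (by omega)]

instance instA (d : ℕ) :
    Finite {u : F2[X] // u.natDegree = d ∧ u.coeff 0 = 1 ∧ IsCoprime u u.reverse} :=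
  finite_subtype d fun u hu => hu.1.le

instance instS (d : ℕ) :
    Finite {u : F2[X] // u.natDegree = d ∧ u.coeff 0 = 1 ∧ u.reverse = u} :=
  finite_subtype d fun u hu => hu.1.le

instance instN (d : ℕ) :
    Finite {u : F2[X] // u.natDegree = d ∧ u.coeff 0 = 1} :=
  finite_subtype d fun u hu => hu.1.le

noncomputable def A (d : ℕ) : ℕ :=
  Nat.card {u : F2[X] // u.natDegree = d ∧ u.coeff 0 = 1 ∧ IsCoprime u u.reverse}

noncomputable def S (d : ℕ) : ℕ :=
  Nat.card {u : F2[X] // u.natDegree = d ∧ u.coeff 0 = 1 ∧ u.reverse = u}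

noncomputable def N (d : ℕ) : ℕ :=
  Nat.card {u : F2[X] // u.natDegree = d ∧ u.coeff 0 = 1}


lemma card_degreeLT (n : ℕ) : Nat.card {q : F2[X] // q.degree < (n : ℕ)} = 2 ^ n := by
  have e1 : {q : F2[X] // q.degree < (n : ℕ)} ≃ degreeLT F2 n :=
    Equiv.subtypeEquivRight fun q => Polynomial.mem_degreeLT.symm
  rw [Nat.card_congr e1, Nat.card_congr (Polynomial.degreeLTEquiv F2 n).toEquiv]
  simp [Nat.card_eq_fintype_card]

lemma addself (x : F2[X]) : x + x = 0 := CharTwo.add_self_eq_zero x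

lemma coeff_top {u : F2[X]} {d : ℕ} (hdeg : u.natDegree = d) (h0 : u.coeff 0 = 1) :
    u.coeff d = 1 := by
  apply F2.eq_one
  rw [← hdeg, Polynomial.coeff_natDegree]
  exact Polynomial.leadingCoeff_ne_zero.mpr (fun h => by simp [h] at h0)

noncomputable def Nequiv (d : ℕ) (hd : 1 ≤ d) :
    {u : F2[X] // u.natDegree = d ∧ u.coeff 0 = 1} ≃ {q : F2[X] // q.degree < ((d-1 : ℕ) : ℕ)} where
  toFun u := ⟨((u : F2[X]) + 1 + X ^ d).divX, by
    obtain ⟨u, hdeg, h0⟩ := u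
    rw [Polynomial.degree_lt_iff_coeff_zero]
    intro m hm
    rw [Polynomial.coeff_divX]
    have hcd := coeff_top hdeg h0
    simp only [Polynomial.coeff_add, Polynomial.coeff_one, Polynomial.coeff_X_pow,
      if_neg (show ¬ (m+1) = 0 by omega)]
    rcases eq_or_lt_of_le (show d ≤ m + 1 by omega) with h' | h'
    · rw [if_pos h'.symm, ← h', hcd, add_zero]
      decide
    · rw [Polynomial.coeff_eq_zero_of_natDegree_lt (by omega), if_neg (by omega)]
      simp⟩
  invFun q := ⟨1 + X * (q : F2[X]) + X ^ d, by
    obtain ⟨q, hq⟩ := q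
    have hcoeff : ∀ m, d ≤ m → (X * q).coeff m = 0 := by
      intro m hm
      cases m with
      | zero => simp
      | succ i =>
        rw [Polynomial.coeff_X_mul]
        exact Polynomial.coeff_eq_zero_of_degree_lt
          (lt_of_lt_of_le hq (by exact_mod_cast (show (d-1 : ℕ) ≤ i by omega)))
    constructor
    · apply le_antisymm
      · rw [Polynomial.natDegree_le_iff_coeff_eq_zero]
        intro m hm
        simp only [Polynomial.coeff_add, Polynomial.coeff_one, Polynomial.coeff_X_pow,
          if_neg (show ¬ m = 0 by omega), if_neg (show ¬ m = d by omega), hcoeff m (by omega)]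
        simp
      · apply Polynomial.le_natDegree_of_ne_zero (n := d)
        simp only [Polynomial.coeff_add, Polynomial.coeff_one, Polynomial.coeff_X_pow,
          if_neg (show ¬ d = 0 by omega), if_pos rfl, hcoeff d le_rfl]
        simp
    · simp only [Polynomial.coeff_add, Polynomial.coeff_one, Polynomial.coeff_X_pow,
        if_pos rfl, if_neg (show ¬ (0:ℕ) = d by omega), Polynomial.mul_coeff_zero,
        Polynomial.coeff_X_zero, zero_mul, add_zero]
      decide⟩
  left_inv := by
    rintro ⟨u, hdeg, h0⟩
    apply Subtype.ext
    simp only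
    have key : (u + 1 + X ^ d).coeff 0 = 0 := by
      simp only [Polynomial.coeff_add, Polynomial.coeff_one, Polynomial.coeff_X_pow, h0,
        if_pos rfl, if_neg (show ¬ (0:ℕ) = d by omega)]
      rw [add_zero]
      decide
    have hX := Polynomial.X_mul_divX_add (p := u + 1 + X ^ d)
    rw [key, map_zero, add_zero] at hX
    rw [hX]
    linear_combination addself 1 + addself (X ^ d : F2[X])
  right_inv := by
    rintro ⟨q, hq⟩
    apply Subtype.ext
    simp only
    have : (1 : F2[X]) + X * q + X ^ d + 1 + X ^ d = X * q := by
      linear_combination addself 1 + addself (X ^ d : F2[X])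
    rw [this]
    ext n
    rw [Polynomial.coeff_divX, Polynomial.coeff_X_mul]

lemma coeff_sum_range (f : ℕ → F2) (M j : ℕ) :
    (∑ i ∈ Finset.range M, C (f i) * X ^ i).coeff j = if j < M then f j else 0 := by
  rw [Polynomial.finset_sum_coeff]
  simp only [Polynomial.coeff_C_mul, Polynomial.coeff_X_pow, mul_ite, mul_one, mul_zero]
  rw [Finset.sum_ite_eq]
  simp [Finset.mem_range]

noncomputable def Sequiv (k : ℕ) (hk : 1 ≤ k) :
    {g : F2[X] // g.natDegree = k ∧ g.coeff 0 = 1 ∧ g.reverse = g} ≃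
      {q : F2[X] // q.degree < ((k/2 : ℕ) : ℕ)} where
  toFun g := ⟨∑ i ∈ Finset.range (k/2), C ((g : F2[X]).coeff (i+1)) * X ^ i, by
    rw [Polynomial.degree_lt_iff_coeff_zero]
    intro j hj
    rw [coeff_sum_range, if_neg (by omega)]⟩
  invFun q := ⟨∑ j ∈ Finset.range (k+1),
      C ((1 + X * (q : F2[X])).coeff (min j (k - j))) * X ^ j, by
    obtain ⟨q, hq⟩ := q
    simp only
    set w : F2[X] := 1 + X * q with hw
    have hw0 : w.coeff 0 = 1 := by simp [hw]
    have hwc : ∀ j, j ≤ k → (∑ j ∈ Finset.range (k+1), C (w.coeff (min j (k - j))) * X ^ j).coeff j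
        = w.coeff (min j (k-j)) := by
      intro j hj
      rw [coeff_sum_range, if_pos (by omega)]
    have hdeg : (∑ j ∈ Finset.range (k+1), C (w.coeff (min j (k - j))) * X ^ j).natDegree = k := by
      apply le_antisymm
      · rw [Polynomial.natDegree_le_iff_coeff_eq_zero]
        intro m hm
        rw [coeff_sum_range, if_neg (by omega)]
      · apply Polynomial.le_natDegree_of_ne_zero (n := k)
        rw [hwc k le_rfl, Nat.min_eq_right (by omega), Nat.sub_self, hw0]
        exact one_ne_zero
    refine ⟨hdeg, ?_, ?_⟩
    · rw [hwc 0 (by omega)]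
      simpa using hw0
    · ext n
      rw [Polynomial.coeff_reverse, hdeg]
      by_cases hn : n ≤ k
      · rw [Polynomial.revAt_le hn, hwc (k-n) (by omega), hwc n hn]
        congr 1
        omega
      · rw [Polynomial.revAt_eq_self_of_lt (by omega)]⟩
  left_inv := by
    rintro ⟨g, hdeg, h0, hrev⟩
    apply Subtype.ext
    simp only
    have hsymm : ∀ n, n ≤ k → g.coeff (k - n) = g.coeff n := by
      intro n hn
      conv_rhs => rw [← hrev]
      rw [Polynomial.coeff_reverse, hdeg, Polynomial.revAt_le hn]
    set t : F2[X] := ∑ i ∈ Finset.range (k/2), C (g.coeff (i+1)) * X ^ i with ht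
    have hwt : ∀ j, (1 + X * t).coeff j = if j = 0 then 1 else if j < k/2 + 1 then g.coeff j else 0 := by
      intro j
      cases j with
      | zero => simp [ht, Polynomial.mul_coeff_zero]
      | succ i =>
        simp only [Polynomial.coeff_add, Polynomial.coeff_one,
          if_neg (show ¬ (i+1) = 0 by omega), Polynomial.coeff_X_mul, zero_add, ht,
          coeff_sum_range]
        by_cases h : i < k/2
        · rw [if_pos h, if_pos (by omega)]
        · rw [if_neg h, if_neg (by omega)]
    ext n
    rw [coeff_sum_range]
    by_cases hn : n ≤ k
    · rw [if_pos (by omega), hwt]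
      have hmin : min n (k - n) ≤ k/2 := by omega
      by_cases h0' : min n (k-n) = 0
      · rw [if_pos h0']
        rcases (show n = 0 ∨ n = k by omega) with h' | h'
        · rw [h', h0]
        · rw [h', ← hsymm k le_rfl, Nat.sub_self, h0]
      · rw [if_neg h0', if_pos (show min n (k-n) < k/2 + 1 by omega)]
        rcases Nat.le_total n (k - n) with h | h
        · rw [Nat.min_eq_left h]
        · rw [Nat.min_eq_right h, hsymm n hn]
    · rw [if_neg (by omega), Polynomial.coeff_eq_zero_of_natDegree_lt (by omega)]
  right_inv := by
    rintro ⟨q, hq⟩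
    apply Subtype.ext
    simp only
    ext i
    rw [coeff_sum_range]
    by_cases hi : i < k/2
    · rw [if_pos hi, coeff_sum_range, if_pos (by omega)]
      have hmin : min (i+1) (k - (i+1)) = i + 1 := by omega
      rw [hmin]
      simp only [Polynomial.coeff_add, Polynomial.coeff_one,
        if_neg (show ¬ (i+1) = 0 by omega), Polynomial.coeff_X_mul, zero_add]
    · rw [if_neg hi, eq_comm]
      exact Polynomial.coeff_eq_zero_of_degree_lt
        (lt_of_lt_of_le hq (by exact_mod_cast (show (k/2 : ℕ) ≤ i by omega)))

lemma ne_zero_of_c0 {p : F2[X]} (h : p.coeff 0 = 1) : p ≠ 0 := fun hp => by simp [hp] at h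
lemma coeff0_of_dvd {p q : F2[X]} (h : p ∣ q) (hq : q.coeff 0 = 1) : p.coeff 0 = 1 := by
  obtain ⟨c, rfl⟩ := h
  rw [Polynomial.mul_coeff_zero] at hq
  exact F2.eq_one (left_ne_zero_of_mul (hq ▸ one_ne_zero))

/-- Uniqueness part: gcd of (g*v) with its reverse is g. -/
lemma gcd_mul_rev {g v : F2[X]} (hgrev : g.reverse = g)
    (hcop : IsCoprime v v.reverse) : gcd (g*v) ((g*v).reverse) = g := by
  rw [Polynomial.reverse_mul_of_domain, hgrev, gcd_mul_left, normalize_eq_self,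
    isUnit_eq_one ((gcd_isUnit_iff _ _).mpr hcop), mul_one]

/-- The multiplication map used for the convolution identity. -/
noncomputable def Phi (d : ℕ) :
    ((k : Fin (d+1)) × ({g : F2[X] // g.natDegree = k ∧ g.coeff 0 = 1 ∧ g.reverse = g} ×
      {v : F2[X] // v.natDegree = d - k ∧ v.coeff 0 = 1 ∧ IsCoprime v v.reverse})) →
    {u : F2[X] // u.natDegree = d ∧ u.coeff 0 = 1} :=
  fun ⟨⟨k, hk⟩, ⟨g, hgd, hg0, hgr⟩, ⟨v, hvd, hv0, hvc⟩⟩ => ⟨g * v, by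
    constructor
    · rw [Polynomial.natDegree_mul (ne_zero_of_c0 hg0) (ne_zero_of_c0 hv0), hgd, hvd]
      show k + (d - k) = d
      omega
    · rw [Polynomial.mul_coeff_zero, hg0, hv0, mul_one]⟩

lemma Phi_bijective (d : ℕ) : Function.Bijective (Phi d) := by
  constructor
  · rintro ⟨⟨k1, hk1⟩, ⟨g1, hgd1, hg01, hgr1⟩, ⟨v1, hvd1, hv01, hvc1⟩⟩
      ⟨⟨k2, hk2⟩, ⟨g2, hgd2, hg02, hgr2⟩, ⟨v2, hvd2, hv02, hvc2⟩⟩ h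
    have hu : g1 * v1 = g2 * v2 := congrArg Subtype.val h
    have hg : g1 = g2 := by
      have e1 := gcd_mul_rev hgr1 hvc1
      have e2 := gcd_mul_rev hgr2 hvc2
      rw [hu] at e1
      exact e1.symm.trans e2
    have hv : v1 = v2 := by
      rw [hg] at hu
      exact mul_left_cancel₀ (ne_zero_of_c0 hg02) hu
    have hk : k1 = k2 := by
      have e1 : g1.natDegree = k1 := hgd1
      have e2 : g2.natDegree = k2 := hgd2
      rw [← e1, ← e2, hg]
    subst hk hg hv
    rfl
  · rintro ⟨u, hud, hu0⟩
    set g := gcd u u.reverse with hgdef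
    have hdl : g ∣ u := gcd_dvd_left _ _
    have hdr : g ∣ u.reverse := gcd_dvd_right _ _
    have hu : u ≠ 0 := ne_zero_of_c0 hu0
    have hg0 : g.coeff 0 = 1 := coeff0_of_dvd hdl hu0
    have hgz : g ≠ 0 := ne_zero_of_c0 hg0
    have hgr : g.reverse = g := by
      apply eq_of_dvd_of_natDegree_le _ hgz (natDegree_reverse_eq hg0).ge
      apply dvd_gcd
      · obtain ⟨t, ht⟩ := hdr
        have h2 := congrArg Polynomial.reverse ht
        rw [reverse_reverse hu0, Polynomial.reverse_mul_of_domain] at h2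
        exact ⟨t.reverse, h2⟩
      · obtain ⟨t, ht⟩ := hdl
        exact ⟨t.reverse, by rw [ht, Polynomial.reverse_mul_of_domain]⟩
    obtain ⟨v, hv⟩ := hdl
    have hv0 : v.coeff 0 = 1 := by
      rw [hv, Polynomial.mul_coeff_zero, hg0, one_mul] at hu0
      exact hu0
    have hvz : v ≠ 0 := ne_zero_of_c0 hv0
    have hkd : g.natDegree ≤ d := hud ▸ Polynomial.natDegree_le_of_dvd ⟨v, hv⟩ hu
    have hvd : v.natDegree = d - g.natDegree := by
      have := Polynomial.natDegree_mul hgz hvz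
      rw [← hv, hud] at this
      omega
    have hvc : IsCoprime v v.reverse := by
      have key : g * gcd v v.reverse = g * 1 := by
        rw [mul_one]
        conv_rhs => rw [hgdef, hv, Polynomial.reverse_mul_of_domain, hgr]
        rw [gcd_mul_left, normalize_eq_self]
      apply (gcd_isUnit_iff _ _).mp
      rw [mul_left_cancel₀ hgz key]
      exact isUnit_one
    exact ⟨⟨⟨g.natDegree, by omega⟩, ⟨g, rfl, hg0, hgr⟩, ⟨v, hvd, hv0, hvc⟩⟩,
      Subtype.ext hv.symm⟩

def b : ℕ → ℤ := fun d => if d = 0 then 1 else if d ≤ 2 then 0 else (2 ^ (d - 1) - 2 * (-1) ^ d) / 3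

lemma dvd3 (n : ℕ) : (3:ℤ) ∣ 2^n - (-1)^n := by
  induction n with
  | zero => simp
  | succ n ih =>
    have h : (2:ℤ)^(n+1) - (-1)^(n+1) = 2*(2^n - (-1)^n) + 3*(-1)^n := by ring
    rw [h]
    exact dvd_add (ih.mul_left 2) ⟨(-1)^n, rfl⟩

lemma b_mul3 {e : ℕ} (he : 2 ≤ e) : 3 * b e = 2^(e-1) - 2*(-1)^e := by
  by_cases h2 : e = 2
  · subst h2; norm_num [b]
  · have he3 : 3 ≤ e := by omega
    rw [b, if_neg (by omega), if_neg (by omega)]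
    have hparity : ((-1):ℤ)^e = -(-1)^(e-1) := by
      conv_lhs => rw [show e = (e-1)+1 by omega]
      rw [pow_succ]; ring
    have hd : (3:ℤ) ∣ 2^(e-1) - 2*(-1)^e := by
      have h1 := dvd3 (e-1)
      have h : (2:ℤ)^(e-1) - 2*(-1)^e = (2^(e-1) - (-1)^(e-1)) + 3 * (-1)^(e-1) := by
        rw [hparity]; ring
      rw [h]
      exact dvd_add h1 ⟨(-1)^(e-1), rfl⟩
    exact Int.mul_ediv_cancel' hd

lemma key2 {d : ℕ} (hd : 1 ≤ d) : b (d+2) + b (d+1) = 2^d := by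
  have h1 := b_mul3 (e := d+2) (by omega)
  have h2 := b_mul3 (e := d+1) (by omega)
  simp only [Nat.add_sub_cancel] at h1 h2
  rw [show d+2-1 = d+1 by omega] at h1
  have hparity : ((-1):ℤ)^(d+2) + (-1)^(d+1) = 0 := by
    rw [pow_succ, pow_succ]; ring
  have hp : (2:ℤ)^(d+1) = 2*2^d := by rw [pow_succ]; ring
  have h3 : 3 * (b (d+2) + b (d+1)) = 3 * 2^d := by
    rw [mul_add, h1, h2]
    linear_combination hp - 2 * hparity
  exact mul_left_cancel₀ three_ne_zero h3

def Nb : ℕ → ℤ := fun d => if d = 0 then 1 else 2^(d-1)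

lemma Fident (d : ℕ) : ∑ k ∈ Finset.range (d+1), (2:ℤ)^(k/2) * b (d - k) = Nb d := by
  induction d using Nat.strong_induction_on with
  | _ d ih =>
    match d with
    | 0 => norm_num [b, Nb]
    | 1 => norm_num [b, Nb, Finset.sum_range_succ]
    | (e+2) =>
      have peel : ∑ k ∈ Finset.range (e+3), (2:ℤ)^(k/2) * b (e+2 - k)
          = (∑ k ∈ Finset.range (e+1), (2:ℤ)^((k+2)/2) * b (e+2 - (k+2)))
            + (2:ℤ)^(1/2) * b (e+2-1) + (2:ℤ)^(0/2) * b (e+2-0) := by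
        rw [Finset.sum_range_succ' (fun k => (2:ℤ)^(k/2) * b (e+2 - k)) (e+2),
          Finset.sum_range_succ' (fun k => (2:ℤ)^((k+1)/2) * b (e+2 - (k+1))) (e+1)]
      rw [peel]
      have step : ∀ k, (2:ℤ)^((k+2)/2) * b (e+2 - (k+2)) = 2 * ((2:ℤ)^(k/2) * b (e - k)) := by
        intro k
        have : (k+2)/2 = k/2 + 1 := by omega
        rw [this, pow_succ, show e + 2 - (k+2) = e - k by omega]
        ring
      rw [Finset.sum_congr rfl (fun k _ => step k), ← Finset.mul_sum, ih e (by omega)]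
      rcases Nat.eq_zero_or_pos e with rfl | he
      · norm_num [b, Nb]
      · have hk2 := key2 he
        simp only [Nb, if_neg (show ¬ e = 0 by omega), if_neg (show ¬ e + 2 = 0 by omega)]
        norm_num
        have h2e : (2:ℤ)^(e-1) * 2 = 2^e := by rw [← pow_succ]; congr 1; omega
        have h2e1 : (2:ℤ)^(e+1) = 2 * 2^e := by rw [pow_succ]; ring
        linear_combination hk2 + h2e - h2e1

-- (appended sections: N_eq, S_eq, conv, A_eq, stmt5) -- scratch marker
lemma eq_one_of_natDegree_zero {u : F2[X]} (hd : u.natDegree = 0) (h0 : u.coeff 0 = 1) :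
    u = 1 := by
  obtain ⟨a, ha⟩ := Polynomial.natDegree_eq_zero.mp hd
  rw [← ha] at h0 ⊢
  rw [Polynomial.coeff_C_zero] at h0
  rw [h0, map_one]

lemma N_eq (d : ℕ) : N d = if d = 0 then 1 else 2 ^ (d - 1) := by
  rcases Nat.eq_zero_or_pos d with rfl | hd
  · rw [if_pos rfl]
    haveI : Nonempty {u : F2[X] // u.natDegree = 0 ∧ u.coeff 0 = 1} :=
      ⟨⟨1, Polynomial.natDegree_one, by simp⟩⟩
    haveI : Subsingleton {u : F2[X] // u.natDegree = 0 ∧ u.coeff 0 = 1} := by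
      constructor
      rintro ⟨u, hu⟩ ⟨v, hv⟩
      exact Subtype.ext ((eq_one_of_natDegree_zero hu.1 hu.2).trans
        (eq_one_of_natDegree_zero hv.1 hv.2).symm)
    exact Nat.card_unique
  · rw [if_neg (by omega), N, Nat.card_congr (Nequiv d hd), card_degreeLT]

lemma S_eq (d : ℕ) : S d = 2 ^ (d / 2) := by
  rcases Nat.eq_zero_or_pos d with rfl | hd
  · haveI : Nonempty {u : F2[X] // u.natDegree = 0 ∧ u.coeff 0 = 1 ∧ u.reverse = u} :=
      ⟨⟨1, Polynomial.natDegree_one, by simp, by simp [Polynomial.reverse]⟩⟩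
    haveI : Subsingleton {u : F2[X] // u.natDegree = 0 ∧ u.coeff 0 = 1 ∧ u.reverse = u} := by
      constructor
      rintro ⟨u, hu⟩ ⟨v, hv⟩
      exact Subtype.ext ((eq_one_of_natDegree_zero hu.1 hu.2.1).trans
        (eq_one_of_natDegree_zero hv.1 hv.2.1).symm)
    exact Nat.card_unique
  · rw [S, Nat.card_congr (Sequiv d hd), card_degreeLT]

lemma conv (d : ℕ) : N d = ∑ k ∈ Finset.range (d + 1), S k * A (d - k) := by
  classical
  haveI i1a : ∀ k : ℕ,
      Fintype {g : F2[X] // g.natDegree = k ∧ g.coeff 0 = 1 ∧ g.reverse = g} :=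
    fun k => Fintype.ofFinite _
  haveI i1b : ∀ k : ℕ,
      Fintype {v : F2[X] // v.natDegree = k ∧ v.coeff 0 = 1 ∧ IsCoprime v v.reverse} :=
    fun k => Fintype.ofFinite _
  have h1 : N d = Nat.card ((k : Fin (d+1)) ×
      ({g : F2[X] // g.natDegree = k ∧ g.coeff 0 = 1 ∧ g.reverse = g} ×
        {v : F2[X] // v.natDegree = d - k ∧ v.coeff 0 = 1 ∧ IsCoprime v v.reverse})) :=
    (Nat.card_eq_of_bijective _ (Phi_bijective d)).symm
  rw [h1, Nat.card_eq_fintype_card, Fintype.card_sigma, ← Fin.sum_univ_eq_sum_range]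
  congr 1
  funext k
  rw [Fintype.card_prod, S, A, Nat.card_eq_fintype_card, Nat.card_eq_fintype_card]

lemma A_eq (d : ℕ) : (A d : ℤ) = b d := by
  induction d using Nat.strong_induction_on with
  | _ d ih =>
    have hc := conv d
    have hcast : (N d : ℤ) = ∑ k ∈ Finset.range (d + 1), (S k : ℤ) * (A (d - k) : ℤ) := by
      rw [hc]; push_cast; rfl
    rw [Finset.sum_range_succ' (fun k => (S k : ℤ) * (A (d - k) : ℤ)) d] at hcast
    have hS0 : ((S 0 : ℤ)) = 1 := by rw [S_eq]; norm_num
    rw [Nat.sub_zero, hS0, one_mul] at hcast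
    have hF := Fident d
    rw [Finset.sum_range_succ' (fun k => (2:ℤ)^(k/2) * b (d - k)) d] at hF
    rw [Nat.sub_zero] at hF
    have hsum : ∑ k ∈ Finset.range d, (S (k+1) : ℤ) * (A (d - (k+1)) : ℤ)
        = ∑ k ∈ Finset.range d, (2:ℤ)^((k+1)/2) * b (d - (k+1)) := by
      apply Finset.sum_congr rfl
      intro k hk
      rw [Finset.mem_range] at hk
      rw [ih (d - (k+1)) (by omega), S_eq]
      push_cast
      ring
    have hNb : (N d : ℤ) = Nb d := by
      rw [N_eq, Nb]
      split_ifs <;> push_cast <;> ring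
    have : (A d : ℤ) = Nb d - ∑ k ∈ Finset.range d, (2:ℤ)^((k+1)/2) * b (d - (k+1)) := by
      rw [← hNb, hcast, hsum]; ring
    rw [this, ← hF]
    norm_num

end Stmt5

/-- The number of polynomials `u ∈ 𝔽₂[z]` of degree `d` with `u(0) = 1` that are coprime
to their reciprocal `ũ(z) = z^d u(1/z)` is `1` if `d = 0`, `0` if `d = 1, 2`, and
`(2^(d-1) - 2(-1)^d)/3` if `d ≥ 3`. -/
theorem stmt5 (d : ℕ) :
    (Nat.card {u : Polynomial (ZMod 2) //
        u.natDegree = d ∧ u.coeff 0 = 1 ∧ IsCoprime u u.reverse} : ℤ)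
      = if d = 0 then 1 else if d ≤ 2 then 0
        else (2 ^ (d - 1) - 2 * (-1) ^ d) / 3 := by
  have h := Stmt5.A_eq d
  rw [Stmt5.A, Stmt5.b] at h
  exact h
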